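/- Let α = (9−√5)/38. For every real number μ with 0 ≤ μ ≤ 1: if the 9×9 real symmetric matrix N(μ) is positive semidefinite, then μ ≤ 5√5 − 11. -/

import Mathlib

noncomputable def α : ℝ := (9 - Real.sqrt 5) / 38

noncomputable def N (μ : ℝ) : Matrix (Fin 9) (Fin 9) ℝ :=
  !![1, μ/2+α*(1-μ), μ/2+2*α*(1-μ), μ/2+α*(1-μ), μ/2+2*α*(1-μ), μ/2, μ/2+α*(1-μ), μ/2+α*(1-μ), 0;
     μ/2+α*(1-μ), μ/2+α*(1-μ), 0, μ/2, μ/2+α*(1-μ), μ/2, μ/2+α*(1-μ), μ/2, 0;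
     μ/2+2*α*(1-μ), 0, μ/2+2*α*(1-μ), μ/2+α*(1-μ), 0, μ/2, 0, μ/2+α*(1-μ), 0;
     μ/2+α*(1-μ), μ/2, μ/2+α*(1-μ), μ/2+α*(1-μ), 0, μ/2, μ/2, μ/2+α*(1-μ), 0;
     μ/2+2*α*(1-μ), μ/2+α*(1-μ), 0, 0, μ/2+2*α*(1-μ), μ/2, μ/2+α*(1-μ), 0, 0;
     μ/2, μ/2, μ/2, μ/2, μ/2, μ/2, μ/2, μ/2, 0;
     μ/2+α*(1-μ), μ/2+α*(1-μ), 0, μ/2, μ/2+α*(1-μ), μ/2, μ/2+α*(1-μ), μ/2, 0;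
     μ/2+α*(1-μ), μ/2, μ/2+α*(1-μ), μ/2+α*(1-μ), 0, μ/2, μ/2, μ/2+α*(1-μ), 0;
     0, 0, 0, 0, 0, 0, 0, 0, 0]

theorem stmt11 (μ : ℝ) (hμ0 : 0 ≤ μ) (hμ1 : μ ≤ 1)
    (h : (N μ).PosSemidef) : μ ≤ 5 * Real.sqrt 5 - 11 := by
  have hs2 : Real.sqrt 5 ^ 2 = 5 := Real.sq_sqrt (by norm_num)
  have hspos : 2 ≤ Real.sqrt 5 := by nlinarith [Real.sqrt_nonneg 5]
  have key := h.dotProduct_mulVec_nonneg ![0, -(1+Real.sqrt 5), -2, 1+Real.sqrt 5, 2, 0, 0, 0, 0]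
  simp only [N, dotProduct, Matrix.mulVec, Fin.sum_univ_succ, Fin.sum_univ_zero,
    Matrix.cons_val', Matrix.cons_val_zero, Matrix.cons_val_one, Matrix.head_cons,
    Matrix.empty_val', Matrix.cons_val_fin_one, Matrix.head_fin_const,
    Matrix.of_apply, Matrix.cons_val_succ, star_trivial, Pi.star_apply, α] at key
  ring_nf at key
  by_contra hc
  push_neg at hc
  nlinarith [key, hs2, hspos, mul_pos (sub_pos.mpr hc)
    (show (0:ℝ) < 25 + 12 * Real.sqrt 5 by nlinarith)]
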